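/- Let μ > 0, λ real, and ℂ the isotropic elasticity tensor ℂE = λ(tr E)I + 2μE acting on symmetric 3×3 matrices E. For v(x) = x/(4μ|x|³), the traction (ℂ ∇̂v) n on the unit sphere, with n(x) = x the outward normal and ∇̂v the symmetric gradient, equals -x, i.e., (λ (div v) I + 2μ ∇̂v(x)) x = -x for |x| = 1. -/

import Mathlib

open Real

lemma traction_key (μ : ℝ) (hμ : 0 < μ) (x : EuclideanSpace ℝ (Fin 3)) (hx : ‖x‖ = 1)
    (i j : Fin 3) :
    fderiv ℝ (fun z : EuclideanSpace ℝ (Fin 3) => (1 / (4 * μ * ‖z‖ ^ 3)) * z i) x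
      (EuclideanSpace.single j 1)
    = ((if i = j then 1 else 0) - 3 * x i * x j) / (4 * μ) := by
  have hx2 : ‖x‖ ^ 2 = 1 := by rw [hx]; norm_num
  have hns : HasFDerivAt (fun z : EuclideanSpace ℝ (Fin 3) => ‖z‖ ^ 2)
      (2 • (innerSL ℝ x)) x := (hasStrictFDerivAt_norm_sq x).hasFDerivAt
  have hr : HasDerivAt (fun t : ℝ => t ^ (-(3:ℝ)/2))
      (-(3:ℝ)/2 * (‖x‖ ^ 2) ^ (-(3:ℝ)/2 - 1)) (‖x‖ ^ 2) :=
    Real.hasDerivAt_rpow_const (Or.inl (by rw [hx2]; norm_num))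
  have hpow : HasFDerivAt (fun z : EuclideanSpace ℝ (Fin 3) => (‖z‖ ^ 2) ^ (-(3:ℝ)/2))
      ((-(3:ℝ)/2 * (‖x‖ ^ 2) ^ (-(3:ℝ)/2 - 1)) • (2 • (innerSL ℝ x))) x :=
    HasDerivAt.comp_hasFDerivAt (f := fun z : EuclideanSpace ℝ (Fin 3) => ‖z‖ ^ 2) x hr hns
  have hc : HasFDerivAt (fun z : EuclideanSpace ℝ (Fin 3) => (4*μ)⁻¹ * (‖z‖ ^ 2) ^ (-(3:ℝ)/2))
      ((4*μ)⁻¹ • ((-(3:ℝ)/2 * (‖x‖ ^ 2) ^ (-(3:ℝ)/2 - 1)) • (2 • (innerSL ℝ x)))) x :=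
    hpow.const_mul _
  have hproj : HasFDerivAt (fun z : EuclideanSpace ℝ (Fin 3) => z i)
      (EuclideanSpace.proj i : EuclideanSpace ℝ (Fin 3) →L[ℝ] ℝ) x :=
    (EuclideanSpace.proj i : EuclideanSpace ℝ (Fin 3) →L[ℝ] ℝ).hasFDerivAt
  have hF := hc.mul hproj
  have hfun : (fun z : EuclideanSpace ℝ (Fin 3) => (1 / (4 * μ * ‖z‖ ^ 3)) * z i)
      = fun z : EuclideanSpace ℝ (Fin 3) => ((4*μ)⁻¹ * (‖z‖ ^ 2) ^ (-(3:ℝ)/2)) * z i := by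
    funext z
    rcases eq_or_ne z 0 with rfl | hz
    · simp
    · have hzn : (0:ℝ) < ‖z‖ := norm_pos_iff.mpr hz
      have : ((‖z‖ : ℝ) ^ 2) ^ (-(3:ℝ)/2) = (‖z‖ ^ 3)⁻¹ := by
        rw [← Real.rpow_natCast ‖z‖ 2, ← Real.rpow_mul (le_of_lt hzn)]
        norm_num
      rw [this]
      field_simp
  rw [hfun, show (fun z : EuclideanSpace ℝ (Fin 3) => ((4*μ)⁻¹ * (‖z‖ ^ 2) ^ (-(3:ℝ)/2)) * z i) = ((fun z : EuclideanSpace ℝ (Fin 3) => (4*μ)⁻¹ * (‖z‖ ^ 2) ^ (-(3:ℝ)/2)) * fun z => z i) from rfl, hF.fderiv]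
  have hinner : (innerSL ℝ x) (EuclideanSpace.single j 1) = x j := by
    simp [EuclideanSpace.inner_single_right]
  have hpa : (EuclideanSpace.proj i : EuclideanSpace ℝ (Fin 3) →L[ℝ] ℝ)
      (EuclideanSpace.single j 1) = if i = j then 1 else 0 := by
    simp [eq_comm]
  simp only [ContinuousLinearMap.add_apply, ContinuousLinearMap.smul_apply, hinner,
    hpa, hx2, Real.one_rpow, smul_eq_mul]
  have h4 : (4:ℝ) * μ ≠ 0 := by positivity
  rcases eq_or_ne i j with rfl | hij
  · simp only [if_pos rfl]
    field_simp
    ring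
  · simp only [if_neg hij, if_neg (Ne.symm hij)]
    field_simp
    ring

/-- For `v(x) = x/(4μ|x|³)`, the elastic traction `(ℂ ∇̂v) n` on the unit sphere
(with outward normal `n(x) = x`) equals `-x`. -/
theorem traction_unit_sphere (μ lam : ℝ) (hμ : 0 < μ)
    (v : EuclideanSpace ℝ (Fin 3) → EuclideanSpace ℝ (Fin 3))
    (hv : ∀ x, v x = (1 / (4 * μ * ‖x‖ ^ 3)) • x)
    (x : EuclideanSpace ℝ (Fin 3)) (hx : ‖x‖ = 1) :
    ∀ i : Fin 3,
      lam * (∑ j : Fin 3, fderiv ℝ (fun z => v z j) x (EuclideanSpace.single j 1)) * x i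
      + 2 * μ * (∑ j : Fin 3,
          ((fderiv ℝ (fun z => v z i) x (EuclideanSpace.single j 1)
            + fderiv ℝ (fun z => v z j) x (EuclideanSpace.single i 1)) / 2) * x j)
      = -(x i) := by
  have hK : ∀ i j : Fin 3,
      fderiv ℝ (fun z => v z i) x (EuclideanSpace.single j 1)
        = ((if i = j then 1 else 0) - 3 * x i * x j) / (4 * μ) := by
    intro i j
    have hfun : (fun z => v z i)
        = fun z : EuclideanSpace ℝ (Fin 3) => (1 / (4 * μ * ‖z‖ ^ 3)) * z i := by
      funext z; rw [hv z]; rfl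
    rw [hfun, traction_key μ hμ x hx i j]
  intro i
  simp only [hK]
  have hsum : x 0 ^ 2 + x 1 ^ 2 + x 2 ^ 2 = 1 := by
    have := hx
    rw [EuclideanSpace.norm_eq] at this
    have h2 : ∑ j : Fin 3, x j ^ 2 = 1 := by
      have hnn : (0:ℝ) ≤ ∑ j : Fin 3, x j ^ 2 :=
        Finset.sum_nonneg fun _ _ => sq_nonneg _
      have := congrArg (fun t : ℝ => t ^ 2) this
      simp only [Real.sq_sqrt (by simpa [sq_abs, sq] using hnn : (0:ℝ) ≤ ∑ j : Fin 3, ‖x j‖ ^ 2)] at this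
      simpa [Real.norm_eq_abs, sq_abs] using this
    simpa [Fin.sum_univ_three] using h2
  have h4 : (4:ℝ) * μ ≠ 0 := by positivity
  have hinv : μ * μ⁻¹ = 1 := mul_inv_cancel₀ (ne_of_gt hμ)
  fin_cases i
  · simp [Fin.sum_univ_three]
    linear_combination (-(3 * lam * x 0) / (4 * μ) - 3 * x 0 / 2) * hsum
      + (x 0 / 2 - 3 / 2 * x 0 * (x 0 ^ 2 + x 1 ^ 2 + x 2 ^ 2)) * hinv
  · simp [Fin.sum_univ_three]
    linear_combination (-(3 * lam * x 1) / (4 * μ) - 3 * x 1 / 2) * hsum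
      + (x 1 / 2 - 3 / 2 * x 1 * (x 0 ^ 2 + x 1 ^ 2 + x 2 ^ 2)) * hinv
  · simp [Fin.sum_univ_three]
    linear_combination (-(3 * lam * x 2) / (4 * μ) - 3 * x 2 / 2) * hsum
      + (x 2 / 2 - 3 / 2 * x 2 * (x 0 ^ 2 + x 1 ^ 2 + x 2 ^ 2)) * hinv
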